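/- Let f ∈ WRP. Then for every z ∈ F_p^* (viewed in F_q via the canonical embedding) and every β ∈ F_q: if β ∈ Supp(W_f) then zβ ∈ Supp(W_f), and if β ∉ Supp(W_f) then zβ ∉ Supp(W_f). Equivalently, the Walsh support of f is invariant under multiplication by nonzero elements of the prime field F_p. -/
import Mathlib


open scoped BigOperators Classical

noncomputable section

/-- `ξ_p^j` for `j : ZMod p`, where `ξ_p = exp(2πi/p)` and the exponent `j`
is lifted to a natural number. -/
def ep (p : ℕ) (j : ZMod p) : ℂ :=
  Complex.exp (2 * Real.pi * Complex.I * (j.val : ℂ) / (p : ℂ))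

/-- `√(p*)`: equal to `√p` if `p ≡ 1 (mod 4)` and to `i√p` if `p ≡ 3 (mod 4)`. -/
def sqrtPStar (p : ℕ) : ℂ :=
  if p % 4 = 1 then ((Real.sqrt p : ℝ) : ℂ) else Complex.I * ((Real.sqrt p : ℝ) : ℂ)

/-- The quadratic character `η₀` of `F_p` (extended by `η₀(0) = 0`), with values in `ℂ`. -/
def eta0 (p : ℕ) [Fact p.Prime] (j : ZMod p) : ℂ :=
  ((quadraticChar (ZMod p) j : ℤ) : ℂ)

/-- The Walsh transform of `f : F_q → F_p`. -/
def walsh (p : ℕ) {F : Type*} [Field F] [Fintype F] [Algebra (ZMod p) F]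
    (f : F → ZMod p) (β : F) : ℂ :=
  ∑ x : F, ep p (f x - Algebra.trace (ZMod p) F (β * x))

/-- `f` is weakly regular `s`-plateaued with sign `ε` and dual `g`:
`W_f(β) = ε √(p*)^{n+s} ξ_p^{g(β)}` on the Walsh support, `W_f(β) = 0` off it,
and `g` vanishes off the Walsh support. -/
def IsWeaklyRegularPlateaued (p n s : ℕ) {F : Type*} [Field F] [Fintype F]
    [Algebra (ZMod p) F] (f : F → ZMod p) (ε : ℂ) (g : F → ZMod p) : Prop :=
  (ε = 1 ∨ ε = -1) ∧
  (∀ β : F, walsh p f β ≠ 0 →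
      walsh p f β = ε * sqrtPStar p ^ (n + s) * ep p (g β)) ∧
  (∀ β : F, walsh p f β = 0 → g β = 0)

/-- `f` lies in the class `WRP`: weakly regular `s`-plateaued with sign `ε` and dual `g`,
unbalanced, `f(0) = 0`, and `f(ax) = a^h f(x)` for some positive even `h` with
`gcd(h-1, p-1) = 1`. -/
def IsWRP (p n s : ℕ) {F : Type*} [Field F] [Fintype F]
    [Algebra (ZMod p) F] (f : F → ZMod p) (ε : ℂ) (g : F → ZMod p) : Prop :=
  IsWeaklyRegularPlateaued p n s f ε g ∧
  walsh p f 0 ≠ 0 ∧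
  f 0 = 0 ∧
  ∃ h : ℕ, 0 < h ∧ Even h ∧ Nat.gcd (h - 1) (p - 1) = 1 ∧
    ∀ (a : (ZMod p)ˣ) (x : F),
      f (algebraMap (ZMod p) F (a : ZMod p) * x) = (a : ZMod p) ^ h * f x

lemma aux_aeval_zero {p : ℕ} (hp : 0 < p) {ζ₁ ζ₂ : ℂ}
    (h₁ : IsPrimitiveRoot ζ₁ p) (h₂ : IsPrimitiveRoot ζ₂ p) (P : Polynomial ℚ)
    (hz : Polynomial.aeval ζ₁ P = 0) : Polynomial.aeval ζ₂ P = 0 := by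
  have hm1 := Polynomial.cyclotomic_eq_minpoly_rat h₁ hp
  have hm2 := Polynomial.cyclotomic_eq_minpoly_rat h₂ hp
  have hdvd : minpoly ℚ ζ₁ ∣ P := minpoly.dvd ℚ ζ₁ hz
  rw [← hm1, hm2] at hdvd
  obtain ⟨Q, rfl⟩ := hdvd
  rw [map_mul, ← hm2, show Polynomial.aeval ζ₂ (Polynomial.cyclotomic p ℚ) = 0 from ?_,
    zero_mul]
  have := minpoly.aeval ℚ ζ₂
  rw [← hm2] at this
  exact this

lemma ep_eq_pow {p : ℕ} (j : ZMod p) :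
    ep p j = Complex.exp (2 * Real.pi * Complex.I / p) ^ j.val := by
  rw [← Complex.exp_nat_mul, ep]
  ring_nf

lemma aux_sum_zero_iff (p : ℕ) [Fact p.Prime] {F : Type*} [Fintype F]
    (u : F → ZMod p) (c : (ZMod p)ˣ) :
    (∑ x : F, ep p ((c : ZMod p) * u x)) = 0 ↔ (∑ x : F, ep p (u x)) = 0 := by
  have hp : 0 < p := (Fact.out : p.Prime).pos
  set ζ : ℂ := Complex.exp (2 * Real.pi * Complex.I / p) with hζ
  have hprim : IsPrimitiveRoot ζ p := Complex.isPrimitiveRoot_exp p hp.ne'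
  have hζp : ζ ^ p = 1 := hprim.pow_eq_one
  have pow_mod : ∀ m : ℕ, ζ ^ (m % p) = ζ ^ m := by
    intro m
    conv_rhs => rw [← Nat.mod_add_div m p, pow_add, pow_mul, hζp, one_pow, mul_one]
  have hcop : Nat.Coprime (c : ZMod p).val p := ZMod.val_coe_unit_coprime c
  have hprim2 : IsPrimitiveRoot (ζ ^ (c : ZMod p).val) p := hprim.pow_of_coprime _ hcop
  set P : Polynomial ℚ := ∑ x : F, Polynomial.X ^ (u x).val with hP
  have haev : ∀ w : ℂ, Polynomial.aeval w P = ∑ x : F, w ^ (u x).val := by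
    intro w; rw [hP, map_sum]; simp
  have e1 : (∑ x : F, ep p (u x)) = Polynomial.aeval ζ P := by
    rw [haev]; exact Finset.sum_congr rfl fun x _ => ep_eq_pow _
  have e2 : (∑ x : F, ep p ((c : ZMod p) * u x)) = Polynomial.aeval (ζ ^ (c : ZMod p).val) P := by
    rw [haev]
    refine Finset.sum_congr rfl fun x _ => ?_
    rw [ep_eq_pow, ← pow_mul, ZMod.val_mul, pow_mod]
  rw [e1, e2]
  exact ⟨aux_aeval_zero hp hprim2 hprim P, aux_aeval_zero hp hprim hprim2 P⟩

lemma walsh_zero_iff (p : ℕ) [Fact p.Prime]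
    {F : Type*} [Field F] [Fintype F] [Algebra (ZMod p) F]
    (f : F → ZMod p)
    (h : ℕ) (hpos : 0 < h)
    (hgcd : Nat.gcd (h - 1) (p - 1) = 1)
    (hhom : ∀ (a : (ZMod p)ˣ) (x : F),
      f (algebraMap (ZMod p) F (a : ZMod p) * x) = (a : ZMod p) ^ h * f x)
    (z : (ZMod p)ˣ) (β : F) :
    walsh p f (algebraMap (ZMod p) F (z : ZMod p) * β) = 0 ↔ walsh p f β = 0 := by
  have hcard : Nat.card (ZMod p)ˣ = p - 1 := by
    rw [Nat.card_eq_fintype_card, ZMod.card_units]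
  have hcop : (Nat.card (ZMod p)ˣ).Coprime (h - 1) := by
    rw [hcard]; exact (Nat.coprime_comm.mp hgcd)
  obtain ⟨a, ha⟩ := (powCoprime hcop).surjective z
  have ha' : a ^ (h - 1) = z := ha
  set A := algebraMap (ZMod p) F with hA
  have haF : A (a : ZMod p) ≠ 0 := by
    simpa using (algebraMap (ZMod p) F).injective.ne (Units.ne_zero a)
  have key : walsh p f (A (z : ZMod p) * β)
      = ∑ x : F, ep p (((a ^ h : (ZMod p)ˣ) : ZMod p) * (f x - Algebra.trace (ZMod p) F (β * x))) := by
    rw [walsh]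
    rw [← Equiv.sum_comp (Equiv.mulLeft₀ (A (a : ZMod p)) haF)
      (fun x => ep p (f x - Algebra.trace (ZMod p) F (A (z : ZMod p) * β * x)))]
    refine Finset.sum_congr rfl fun x _ => ?_
    have h1 : f (A (a : ZMod p) * x) = (a : ZMod p) ^ h * f x := hhom a x
    have hz : (z : ZMod p) = (a : ZMod p) ^ (h - 1) := by
      rw [← ha']; simp
    have h2 : A (z : ZMod p) * β * (A (a : ZMod p) * x)
        = A ((a : ZMod p) ^ h) * (β * x) := by
      have hpow : (a : ZMod p) ^ (h - 1) * (a : ZMod p) = (a : ZMod p) ^ h := by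
        rw [← pow_succ, Nat.sub_add_cancel hpos]
      rw [hz, ← hpow, map_mul]
      ring
    have h3 : Algebra.trace (ZMod p) F (A ((a : ZMod p) ^ h) * (β * x))
        = (a : ZMod p) ^ h * Algebra.trace (ZMod p) F (β * x) := by
      rw [hA, ← Algebra.smul_def, map_smul, smul_eq_mul]
    simp only [Equiv.mulLeft₀_apply]
    rw [h1, h2, h3, Units.val_pow_eq_pow_val, ← mul_sub]
  rw [key, walsh]
  exact aux_sum_zero_iff p _ (a ^ h)

theorem statement_2 (p n s : ℕ) [Fact p.Prime] (hp : p ≠ 2) (hn : 0 < n) (hs : s ≤ n)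
    {F : Type*} [Field F] [Fintype F] [Algebra (ZMod p) F]
    (hq : Fintype.card F = p ^ n)
    (f g : F → ZMod p) (ε : ℂ)
    (hf : IsWRP p n s f ε g) :
    ∀ (z : (ZMod p)ˣ) (β : F),
      (walsh p f β ≠ 0 →
        walsh p f (algebraMap (ZMod p) F (z : ZMod p) * β) ≠ 0) ∧
      (walsh p f β = 0 →
        walsh p f (algebraMap (ZMod p) F (z : ZMod p) * β) = 0) := by
  obtain ⟨-, -, -, h, hpos, -, hgcd, hhom⟩ := hf
  intro z β
  have hiff := walsh_zero_iff p f h hpos hgcd hhom z β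
  exact ⟨fun hne h0 => hne (hiff.mp h0), fun h0 => hiff.mpr h0⟩
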